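/- Let Δ : ℝ³ → [0,∞) be radial and Lipschitz in the radial variable with |Δ(p) - Δ(q)| ≤ L ||p| - |q|| where L ≤ C μ^{1/2 - δ} for some δ > 0, and let Ξ = inf_p √((p²-μ)² + Δ(p)²). Then for any p with |p²-μ| ≤ Δ(√μ) one has |Δ(p) - Δ(√μ)| ≤ C μ^{-δ} Δ(√μ), and consequently Ξ = Δ(√μ)(1 + o(1)) as μ → ∞. -/

import Mathlib

open MeasureTheory Real Filter

private lemma egf_key (Δ : ℝ → EuclideanSpace ℝ (Fin 3) → ℝ)
    (C δ : ℝ) (hC : 0 < C) (hδ : 0 < δ)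
    (hpos : ∀ μ p, 0 < Δ μ p)
    (hlip : ∀ μ : ℝ, 1 ≤ μ → ∀ p q : EuclideanSpace ℝ (Fin 3),
      |Δ μ p - Δ μ q| ≤ C * μ ^ ((1 : ℝ) / 2 - δ) * |‖p‖ - ‖q‖|)
    (μ : ℝ) (hμ : 1 ≤ μ) (p : EuclideanSpace ℝ (Fin 3))
    (hp : |‖p‖ ^ 2 - μ| ≤ Δ μ (Real.sqrt μ • (EuclideanSpace.single 0 1))) :
      |Δ μ p - Δ μ (Real.sqrt μ • (EuclideanSpace.single 0 1))| ≤
        C * μ ^ (-δ) * Δ μ (Real.sqrt μ • (EuclideanSpace.single 0 1)) := by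
  have hμ0 : (0 : ℝ) < μ := lt_of_lt_of_le one_pos hμ
  set q : EuclideanSpace ℝ (Fin 3) := Real.sqrt μ • (EuclideanSpace.single 0 1) with hqdef
  set D := Δ μ q with hD
  have hs : 0 < Real.sqrt μ := Real.sqrt_pos.2 hμ0
  have hq : ‖q‖ = Real.sqrt μ := by
    rw [hqdef, norm_smul, EuclideanSpace.norm_single]
    simp [abs_of_nonneg (Real.sqrt_nonneg μ)]
  have hsq : Real.sqrt μ ^ 2 = μ := Real.sq_sqrt hμ0.le
  have h1 : |‖p‖ - Real.sqrt μ| ≤ |‖p‖ ^ 2 - μ| / Real.sqrt μ := by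
    rw [le_div_iff₀ hs]
    have hn : (0 : ℝ) ≤ ‖p‖ + Real.sqrt μ := by positivity
    calc |‖p‖ - Real.sqrt μ| * Real.sqrt μ
        ≤ |‖p‖ - Real.sqrt μ| * (‖p‖ + Real.sqrt μ) := by
          apply mul_le_mul_of_nonneg_left _ (abs_nonneg _)
          linarith [norm_nonneg p]
      _ = |‖p‖ ^ 2 - μ| := by
          rw [← abs_of_nonneg hn, ← abs_mul]
          congr 1
          nlinarith [hsq]
  have hDpos : 0 < D := hpos μ q
  have hr : μ ^ ((1 : ℝ) / 2 - δ) / μ ^ ((1 : ℝ) / 2) = μ ^ (-δ) := by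
    rw [← Real.rpow_sub hμ0]
    norm_num
  calc |Δ μ p - D| ≤ C * μ ^ ((1 : ℝ) / 2 - δ) * |‖p‖ - ‖q‖| := hlip μ hμ p q
    _ ≤ C * μ ^ ((1 : ℝ) / 2 - δ) * (D / Real.sqrt μ) := by
        apply mul_le_mul_of_nonneg_left _ (by positivity)
        rw [hq]
        refine h1.trans ?_
        gcongr
    _ = C * (μ ^ ((1 : ℝ) / 2 - δ) / μ ^ ((1 : ℝ) / 2)) * D := by
        rw [Real.sqrt_eq_rpow]; ring
    _ = C * μ ^ (-δ) * D := by rw [hr]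

theorem energyGap_eq_gap_at_fermi (Δ : ℝ → EuclideanSpace ℝ (Fin 3) → ℝ)
    (C δ : ℝ) (hC : 0 < C) (hδ : 0 < δ)
    (hpos : ∀ μ p, 0 < Δ μ p)
    (hlip : ∀ μ : ℝ, 1 ≤ μ → ∀ p q : EuclideanSpace ℝ (Fin 3),
      |Δ μ p - Δ μ q| ≤ C * μ ^ ((1 : ℝ) / 2 - δ) * |‖p‖ - ‖q‖|) :
    (∃ C' > (0 : ℝ), ∀ μ : ℝ, 1 ≤ μ → ∀ p : EuclideanSpace ℝ (Fin 3),
      |‖p‖ ^ 2 - μ| ≤ Δ μ (Real.sqrt μ • (EuclideanSpace.single 0 1)) →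
      |Δ μ p - Δ μ (Real.sqrt μ • (EuclideanSpace.single 0 1))| ≤
        C' * μ ^ (-δ) * Δ μ (Real.sqrt μ • (EuclideanSpace.single 0 1))) ∧
    Filter.Tendsto (fun μ : ℝ =>
        (⨅ p : EuclideanSpace ℝ (Fin 3),
          Real.sqrt ((‖p‖ ^ 2 - μ) ^ 2 + Δ μ p ^ 2)) /
          Δ μ (Real.sqrt μ • (EuclideanSpace.single 0 1)))
      Filter.atTop (nhds 1) := by
  constructor
  · exact ⟨C, hC, fun μ hμ p hp => egf_key Δ C δ hC hδ hpos hlip μ hμ p hp⟩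
  · -- squeeze
    have h0 : Tendsto (fun μ : ℝ => 1 - C * μ ^ (-δ)) atTop (nhds 1) := by
      have := (tendsto_rpow_neg_atTop hδ).const_mul C
      simpa using tendsto_const_nhds.sub this
    apply tendsto_of_tendsto_of_tendsto_of_le_of_le' h0 tendsto_const_nhds
    · -- lower bound eventually
      filter_upwards [eventually_ge_atTop (1 : ℝ)] with μ hμ
      have hμ0 : (0 : ℝ) < μ := lt_of_lt_of_le one_pos hμ
      set q : EuclideanSpace ℝ (Fin 3) := Real.sqrt μ • (EuclideanSpace.single 0 1) with hqdef
      set D := Δ μ q with hD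
      have hDpos : 0 < D := hpos μ q
      rw [le_div_iff₀ hDpos]
      apply le_ciInf
      intro p
      rcases le_total (|‖p‖ ^ 2 - μ|) D with hcase | hcase
      · have hkey := egf_key Δ C δ hC hδ hpos hlip μ hμ p hcase
        have h2 : Δ μ p ≤ Real.sqrt ((‖p‖ ^ 2 - μ) ^ 2 + Δ μ p ^ 2) := by
          have h := Real.sqrt_le_sqrt (show Δ μ p ^ 2 ≤ (‖p‖ ^ 2 - μ) ^ 2 + Δ μ p ^ 2 by
            nlinarith [sq_nonneg (‖p‖ ^ 2 - μ)])
          rwa [Real.sqrt_sq (hpos μ p).le] at h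
        have := abs_le.1 hkey
        linarith [this.1]
      · have h2 : |‖p‖ ^ 2 - μ| ≤ Real.sqrt ((‖p‖ ^ 2 - μ) ^ 2 + Δ μ p ^ 2) := by
          have : |‖p‖ ^ 2 - μ| = Real.sqrt ((‖p‖ ^ 2 - μ) ^ 2) := (Real.sqrt_sq_eq_abs _).symm
          rw [this]
          apply Real.sqrt_le_sqrt
          nlinarith [sq_nonneg (Δ μ p)]
        have hx : 0 ≤ C * μ ^ (-δ) := by positivity
        nlinarith
    · -- upper bound eventually
      filter_upwards [eventually_ge_atTop (1 : ℝ)] with μ hμ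
      have hμ0 : (0 : ℝ) < μ := lt_of_lt_of_le one_pos hμ
      set q : EuclideanSpace ℝ (Fin 3) := Real.sqrt μ • (EuclideanSpace.single 0 1) with hqdef
      set D := Δ μ q with hD
      have hDpos : 0 < D := hpos μ q
      rw [div_le_one hDpos]
      have hq : ‖q‖ = Real.sqrt μ := by
        rw [hqdef, norm_smul, EuclideanSpace.norm_single]
        simp [abs_of_nonneg (Real.sqrt_nonneg μ)]
      have hbdd : BddBelow (Set.range fun p : EuclideanSpace ℝ (Fin 3) =>
          Real.sqrt ((‖p‖ ^ 2 - μ) ^ 2 + Δ μ p ^ 2)) := by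
        refine ⟨0, ?_⟩
        rintro _ ⟨p, rfl⟩
        exact Real.sqrt_nonneg _
      calc (⨅ p : EuclideanSpace ℝ (Fin 3),
            Real.sqrt ((‖p‖ ^ 2 - μ) ^ 2 + Δ μ p ^ 2))
          ≤ Real.sqrt ((‖q‖ ^ 2 - μ) ^ 2 + Δ μ q ^ 2) := ciInf_le hbdd q
        _ = D := by
            rw [hq, Real.sq_sqrt hμ0.le]
            simp [Real.sqrt_sq hDpos.le]
            exact Real.sqrt_sq (hpos μ q).le
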